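/- The composite φ̃ ∘ ψ̃ is the identity on the marked chain polytope C(P,A)_λ. -/
import Mathlib


open Finset Set

section Marked

variable {P : Type*} [PartialOrder P]

/-- A marked poset: `A` contains all extremal (minimal or maximal) elements of `P`. -/
def IsMarkedPoset (A : Set P) : Prop := ∀ p : P, IsMin p ∨ IsMax p → p ∈ A

/-- The marked order polytope `O(P,A)_λ ⊆ ℝ^{P-A}`. -/
def markedOrderPolytope (A : Set P) (lam : P → ℝ) : Set ({p : P // p ∉ A} → ℝ) :=
  {x | (∀ p q : {p : P // p ∉ A}, (p : P) < (q : P) → x p ≤ x q) ∧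
       (∀ a ∈ A, ∀ p : {p : P // p ∉ A}, a < (p : P) → lam a ≤ x p) ∧
       (∀ a ∈ A, ∀ p : {p : P // p ∉ A}, (p : P) < a → x p ≤ lam a)}

/-- The marked chain polytope `C(P,A)_λ ⊆ ℝ^{P-A}`. -/
def markedChainPolytope (A : Set P) (lam : P → ℝ) : Set ({p : P // p ∉ A} → ℝ) :=
  {x | (∀ p, 0 ≤ x p) ∧
       ∀ a ∈ A, ∀ b ∈ A, ∀ (k : ℕ) (c : Fin (k + 1) → {p : P // p ∉ A}),
         StrictMono c → a < (c 0 : P) → (c (Fin.last k) : P) < b →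
         ∑ i, x (c i) ≤ lam b - lam a}

/-- The transfer map `φ̃`: `φ̃(x)_p` is the minimum of `x_p - x_q` over covers `q ⋖ p`,
where `x_q` is read as `λ_q` when `q ∈ A`. -/
noncomputable def transferMap (A : Set P) (lam : P → ℝ)
    (x : {p : P // p ∉ A} → ℝ) : {p : P // p ∉ A} → ℝ := fun p =>
  sInf ({v | ∃ q : {p : P // p ∉ A}, (q : P) ⋖ (p : P) ∧ v = x p - x q} ∪
        {v | ∃ a ∈ A, a ⋖ (p : P) ∧ v = x p - lam a})

open scoped Classical in
/-- The map `ψ`, defined recursively going up the poset: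
`ψ(y)_p = λ_p` for `p ∈ A`, and `ψ(y)_p = y_p + max {ψ(y)_q : p ≻ q}` for `p ∉ A`. -/
noncomputable def psiFull [Finite P] (A : Set P) (lam : P → ℝ)
    (y : {p : P // p ∉ A} → ℝ) : P → ℝ :=
  WellFounded.fix wellFounded_lt (fun p ih =>
    if h : p ∈ A then lam p
    else y ⟨p, h⟩ + sSup {v | ∃ q, ∃ hq : q ⋖ p, v = ih q hq.lt})

/-- `ψ̃(y)`: the restriction of `ψ(y)` to the coordinates in `P - A`. -/
noncomputable def psiTilde [Finite P] (A : Set P) (lam : P → ℝ)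
    (y : {p : P // p ∉ A} → ℝ) : {p : P // p ∉ A} → ℝ :=
  fun p => psiFull A lam y p

end Marked


variable {P : Type*} [PartialOrder P]

open scoped Classical in
lemma psiFull_eq [Finite P] (A : Set P) (lam : P → ℝ)
    (y : {p : P // p ∉ A} → ℝ) (p : P) :
    psiFull A lam y p =
      if h : p ∈ A then lam p
      else y ⟨p, h⟩ + sSup {v | ∃ q, ∃ _ : q ⋖ p, v = psiFull A lam y q} := by
  rw [psiFull, WellFounded.fix_eq]

/-- `φ̃ ∘ ψ̃` is the identity on the marked chain polytope. -/
theorem transferMap_psiTilde [Fintype P] (A : Set P) (lam : P → ℝ)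
    (hA : IsMarkedPoset A) :
    ∀ y ∈ markedChainPolytope A lam, transferMap A lam (psiTilde A lam y) = y := by
  intro y _ 
  funext p
  have hpA : (p : P) ∉ A := p.2
  -- the set of psiFull-values at covers of p
  set S : Set ℝ := psiFull A lam y '' {q : P | q ⋖ (p : P)} with hS
  have hSfin : S.Finite := (Set.toFinite _).image _
  have hSne : S.Nonempty := by
    have hmin : ¬ IsMin (p : P) := fun h => hpA (hA p (Or.inl h))
    obtain ⟨q, hq⟩ := not_isMin_iff.mp hmin
    obtain ⟨x, _, hx⟩ := exists_le_covBy_of_lt hq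
    exact ⟨psiFull A lam y x, x, hx, rfl⟩
  -- the transfer map set is the image of S under (c - ·)
  have hT : ({v | ∃ q : {p : P // p ∉ A}, (q : P) ⋖ (p : P) ∧
        v = psiTilde A lam y p - psiTilde A lam y q} ∪
        {v | ∃ a ∈ A, a ⋖ (p : P) ∧ v = psiTilde A lam y p - lam a}) =
      (fun s => psiFull A lam y p - s) '' S := by
    ext v
    constructor
    · rintro (⟨q, hq, rfl⟩ | ⟨a, ha, hq, rfl⟩)
      · exact ⟨psiFull A lam y q, ⟨q, hq, rfl⟩, rfl⟩
      · refine ⟨psiFull A lam y a, ⟨a, hq, rfl⟩, ?_⟩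
        simp [psiTilde, psiFull_eq A lam y a, ha]
    · rintro ⟨s, ⟨q, hq, rfl⟩, rfl⟩
      by_cases hqA : q ∈ A
      · exact Or.inr ⟨q, hqA, hq, by simp [psiTilde, psiFull_eq A lam y q, hqA]⟩
      · exact Or.inl ⟨⟨q, hqA⟩, hq, rfl⟩
  have hsup_mem : sSup S ∈ S := hSne.csSup_mem hSfin
  have hInf : sInf ((fun s => psiFull A lam y p - s) '' S)
      = psiFull A lam y p - sSup S := by
    apply le_antisymm
    · exact csInf_le (hSfin.image _).bddBelow ⟨sSup S, hsup_mem, rfl⟩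
    · refine le_csInf (hSne.image _) ?_
      rintro v ⟨s, hs, rfl⟩
      have := le_csSup hSfin.bddAbove hs
      simpa using sub_le_sub_left this _
  have hpval : psiFull A lam y p = y p + sSup S := by
    rw [psiFull_eq A lam y p, dif_neg hpA]
    congr 2
    ext v
    constructor
    · rintro ⟨q, hq, rfl⟩; exact ⟨q, hq, rfl⟩
    · rintro ⟨q, hq, rfl⟩; exact ⟨q, hq, rfl⟩
  rw [transferMap, hT, hInf, hpval]
  ring
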